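/- Let d2, d3 be integers with 3 ≤ d2 ≤ d3 such that 3 does not divide d2 and d3 cannot be written as 3a + b·d2 with natural numbers a, b. Then there do not exist a permutation (e₁,e₂,e₃) of (3,d2,d3) and a positive integer n with e₁ = 2n, e₂ = n·s for some odd integer s ≥ 3, and 2n < e₃ ≤ n·s. -/
import Mathlib


/-- Suppose `3 ≤ d2 ≤ d3`, `3 ∤ d2` and `d3 ∉ 3ℕ + d2ℕ`. Then no permutation `(e₁, e₂, e₃)` of
`(3, d2, d3)` fits the degree pattern of a Shestakov–Umirbaev reduction of type I:
`e₁ = 2n`, `e₂ = n·s` with `s ≥ 3` odd, and `2n < e₃ ≤ n·s`. -/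
theorem no_type_I_pattern (d2 d3 : ℕ) (h2 : 3 ≤ d2) (h23 : d2 ≤ d3)
    (hdvd : ¬ 3 ∣ d2) (hmem : ¬ ∃ a b : ℕ, d3 = 3 * a + b * d2) :
    ¬ ∃ (e : Fin 3 → ℕ) (σ : Equiv.Perm (Fin 3)) (n s : ℕ),
      e = ![3, d2, d3] ∘ σ ∧ 0 < n ∧ e 0 = 2 * n ∧ e 1 = n * s ∧ Odd s ∧ 3 ≤ s ∧
        2 * n < e 2 ∧ e 2 ≤ n * s := by
  rintro ⟨e, σ, n, s, he, hn, h0, h1, hs, hs3, h2lt, h2le⟩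
  have hv : ∀ j, 3 ≤ (![3, d2, d3] : Fin 3 → ℕ) j := by
    intro j; fin_cases j <;> simp <;> omega
  have he0 : 3 ≤ e 0 := by rw [he]; exact hv _
  have hn2 : 2 ≤ n := by omega
  have key : e (σ.symm 0) = 3 := by rw [he]; simp
  have hmul : 2 * 3 ≤ n * s := Nat.mul_le_mul hn2 hs3
  have h4 : ∀ i, 4 ≤ e i := by
    intro i
    fin_cases i
    · show 4 ≤ e 0; omega
    · show 4 ≤ e 1; omega
    · show 4 ≤ e 2; omega
  have := h4 (σ.symm 0)
  omega
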